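/- Let H be an infinite-dimensional real Hilbert space with a Hilbert (orthonormal) basis (f_n)_{n≥1}, let c > 0, and define the Borel measure ν := Σ_{n=1}^∞ c·δ_{f_n/n}, where δ_x denotes the Dirac measure at x. Then: (i) ∫_H ‖ξ‖² dν(ξ) = c·Σ_{n=1}^∞ 1/n² < ∞; (ii) for every u ∈ H, ∫_H |⟨ξ, u⟩| dν(ξ) = c·Σ_{n=1}^∞ |⟨f_n, u⟩|/n < ∞; and (iii) ∫_H ‖ξ‖ dν(ξ) = ∞. -/

import Mathlib

open MeasureTheory
open scoped RealInnerProductSpace ENNReal NNReal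

section Aux

variable {H : Type*} [NormedAddCommGroup H] [InnerProductSpace ℝ H]
    [MeasurableSpace H] [BorelSpace H]

lemma aux_lintegral (a : ℕ → H) (c : ℝ) (g : H → ℝ≥0∞) (hg : Measurable g) :
    ∫⁻ ξ, g ξ ∂(Measure.sum fun n => ENNReal.ofReal c • Measure.dirac (a n))
      = ∑' n, ENNReal.ofReal c * g (a n) := by
  rw [lintegral_sum_measure]
  congr 1
  ext n
  rw [lintegral_smul_measure, lintegral_dirac' _ hg, smul_eq_mul]

lemma aux_main (a : ℕ → H) (c : ℝ) (hc : 0 < c) (h : H → ℝ) (hm : Measurable h)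
    (h0 : ∀ x, 0 ≤ h x) (hs : Summable fun n => h (a n)) :
    Integrable h (Measure.sum fun n => ENNReal.ofReal c • Measure.dirac (a n)) ∧
    ∫ ξ, h ξ ∂(Measure.sum fun n => ENNReal.ofReal c • Measure.dirac (a n))
      = c * ∑' n, h (a n) := by
  have hint : Integrable h (Measure.sum fun n => ENNReal.ofReal c • Measure.dirac (a n)) := by
    refine ⟨hm.aestronglyMeasurable, ?_⟩
    rw [HasFiniteIntegral]
    have heq : (fun ξ => ‖h ξ‖ₑ) = fun ξ => ENNReal.ofReal (h ξ) := by
      ext ξ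
      rw [← ofReal_norm_eq_enorm, Real.norm_of_nonneg (h0 ξ)]
    rw [heq, aux_lintegral a c (fun ξ => ENNReal.ofReal (h ξ)) (by exact ENNReal.measurable_ofReal.comp hm)]
    rw [ENNReal.tsum_mul_left, ← ENNReal.ofReal_tsum_of_nonneg (fun n => h0 _) hs]
    exact ENNReal.mul_lt_top ENNReal.ofReal_lt_top ENNReal.ofReal_lt_top
  refine ⟨hint, ?_⟩
  rw [integral_sum_measure hint]
  have hterm : ∀ n : ℕ, ∫ ξ, h ξ ∂(ENNReal.ofReal c • Measure.dirac (a n)) = c * h (a n) := by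
    intro n
    rw [integral_smul_measure, integral_dirac' _ _ hm.stronglyMeasurable,
      ENNReal.toReal_ofReal hc.le, smul_eq_mul]
  simp_rw [hterm]
  exact tsum_mul_left

end Aux

theorem stmt_13 {H : Type*} [NormedAddCommGroup H] [InnerProductSpace ℝ H] [CompleteSpace H]
    [MeasurableSpace H] [BorelSpace H]
    (f : HilbertBasis ℕ ℝ H) (c : ℝ) (hc : 0 < c)
    (ν : Measure H)
    (hν : ν = Measure.sum (fun n : ℕ =>
      ENNReal.ofReal c • Measure.dirac ((((n : ℝ) + 1)⁻¹) • f n))) :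
    (Summable (fun n : ℕ => 1 / ((n : ℝ) + 1) ^ 2) ∧
      Integrable (fun ξ : H => ‖ξ‖ ^ 2) ν ∧
      ∫ ξ, ‖ξ‖ ^ 2 ∂ν = c * ∑' n : ℕ, 1 / ((n : ℝ) + 1) ^ 2) ∧
    (∀ u : H,
      Summable (fun n : ℕ => |⟪f n, u⟫| / ((n : ℝ) + 1)) ∧
      Integrable (fun ξ : H => |⟪ξ, u⟫|) ν ∧
      ∫ ξ, |⟪ξ, u⟫| ∂ν = c * ∑' n : ℕ, |⟪f n, u⟫| / ((n : ℝ) + 1)) ∧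
    (∫⁻ ξ, ENNReal.ofReal ‖ξ‖ ∂ν = ⊤) := by
  set a : ℕ → H := fun n => (((n : ℝ) + 1)⁻¹) • f n with ha
  have hpos : ∀ n : ℕ, (0 : ℝ) < (n : ℝ) + 1 := fun n => by positivity
  have hnorm : ∀ n : ℕ, ‖a n‖ = ((n : ℝ) + 1)⁻¹ := by
    intro n
    rw [ha, norm_smul, f.orthonormal.1 n, mul_one, Real.norm_eq_abs,
      abs_of_pos (inv_pos.2 (hpos n))]
  have hsum : Summable (fun n : ℕ => 1 / ((n : ℝ) + 1) ^ 2) := by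
    have h2 : Summable (fun n : ℕ => 1 / (n : ℝ) ^ 2) :=
      Real.summable_one_div_nat_pow.2 one_lt_two
    have h3 := (summable_nat_add_iff 1).2 h2
    convert h3 using 2 with n
    · rfl
    push_cast
    ring_nf
  constructor
  · -- part (i)
    have hfun : (fun n : ℕ => ‖a n‖ ^ 2) = fun n : ℕ => 1 / ((n : ℝ) + 1) ^ 2 := by
      funext n
      rw [hnorm n]
      field_simp
    have key := aux_main a c hc (fun ξ => ‖ξ‖ ^ 2)
      ((continuous_norm.pow 2).measurable) (fun x => by positivity)
      (by show Summable (fun n : ℕ => ‖a n‖ ^ 2); rw [hfun]; exact hsum)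
    refine ⟨hsum, hν ▸ key.1, ?_⟩
    rw [hν, key.2]
    congr 1
    exact tsum_congr fun n => congrFun hfun n
  constructor
  · -- part (ii)
    intro u
    have hval : ∀ n : ℕ, |⟪a n, u⟫| = |⟪f n, u⟫| / ((n : ℝ) + 1) := by
      intro n
      rw [ha]
      simp only [real_inner_smul_left]
      rw [abs_mul, abs_of_pos (inv_pos.2 (hpos n)), div_eq_mul_inv, mul_comm]
    have hsum2 : Summable (fun n : ℕ => |⟪f n, u⟫| / ((n : ℝ) + 1)) := by
      have hsq : Summable (fun n : ℕ => |⟪f n, u⟫| ^ 2) := by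
        have h4 := f.summable_inner_mul_inner u u
        convert h4 using 2 with n
        · rfl
        rw [sq_abs, real_inner_comm u (f n), sq]
      have hsq2 : Summable (fun n : ℕ => (((n : ℝ) + 1)⁻¹) ^ 2) := by
        convert hsum using 2 with n
        field_simp
      refine Summable.of_nonneg_of_le (fun n => by positivity) (fun n => ?_)
        ((hsq.add hsq2).div_const 2)
      have h5 : |⟪f n, u⟫| / ((n : ℝ) + 1) = |⟪f n, u⟫| * ((n : ℝ) + 1)⁻¹ :=
        div_eq_mul_inv _ _
      rw [h5]
      nlinarith [sq_nonneg (|⟪f n, u⟫| - ((n : ℝ) + 1)⁻¹), abs_nonneg ⟪f n, u⟫,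
        inv_pos.2 (hpos n)]
    have hmeas : Measurable (fun ξ : H => |⟪ξ, u⟫|) := by
      have heq : (fun ξ : H => |⟪ξ, u⟫|) = fun ξ : H => |⟪u, ξ⟫| := by
        funext ξ; rw [real_inner_comm]
      rw [heq]
      exact ((innerSL ℝ u).continuous.abs).measurable
    have hfun : (fun n : ℕ => |⟪a n, u⟫|) = fun n : ℕ => |⟪f n, u⟫| / ((n : ℝ) + 1) :=
      funext hval
    have key := aux_main a c hc (fun ξ => |⟪ξ, u⟫|) hmeas (fun x => abs_nonneg _)
      (by show Summable (fun n : ℕ => |⟪a n, u⟫|); rw [hfun]; exact hsum2)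
    refine ⟨hsum2, hν ▸ key.1, ?_⟩
    rw [hν, key.2]
    congr 1
    exact tsum_congr fun n => hval n
  · -- part (iii)
    rw [hν]
    rw [show (Measure.sum fun n : ℕ => ENNReal.ofReal c •
        Measure.dirac ((((n : ℝ) + 1)⁻¹) • f n)) =
      (Measure.sum fun n : ℕ => ENNReal.ofReal c • Measure.dirac (a n)) from rfl]
    rw [aux_lintegral a c (fun ξ => ENNReal.ofReal ‖ξ‖) (by exact ENNReal.measurable_ofReal.comp continuous_norm.measurable)]
    by_contra htop
    have hne : (∑' n : ℕ, ENNReal.ofReal c * ENNReal.ofReal ‖a n‖) ≠ ⊤ := htop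
    have heq : ∀ n : ℕ, ENNReal.ofReal c * ENNReal.ofReal ‖a n‖
        = ((c / ((n : ℝ) + 1)).toNNReal : ℝ≥0∞) := by
      intro n
      rw [hnorm n, ← ENNReal.ofReal_mul hc.le, ← div_eq_mul_inv]
      rfl
    simp_rw [heq] at hne
    have hsumm : Summable (fun n : ℕ => (c / ((n : ℝ) + 1)).toNNReal) :=
      ENNReal.tsum_coe_ne_top_iff_summable.1 hne
    have hsummR : Summable (fun n : ℕ => c / ((n : ℝ) + 1)) := by
      have h6 := NNReal.summable_coe.2 hsumm
      convert h6 using 2 with n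
      rw [Real.coe_toNNReal]
      positivity
    have h1 : Summable (fun n : ℕ => 1 / ((n : ℝ) + 1)) := by
      have h7 := hsummR.mul_left c⁻¹
      convert h7 using 2 with n
      · rfl
      field_simp
    have h8 : Summable (fun n : ℕ => 1 / ((n + 1 : ℕ) : ℝ)) := by
      convert h1 using 2 with n
      push_cast
      ring
    exact Real.not_summable_one_div_natCast ((summable_nat_add_iff 1).1 h8)
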